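/- An FC-group G has finitely many maximal abelian subgroups if and only if G/Z(G) is finite; moreover, if G/Z(G) is infinite then G has at least 2^ℵ₀ maximal abelian subgroups. -/

import Mathlib

section Aux

variable {G : Type*} [Group G]

lemma aux_isCommutative_iff {H : Subgroup G} :
    IsMulCommutative H ↔ ∀ a ∈ H, ∀ b ∈ H, a * b = b * a := by
  constructor
  · intro h a ha b hb
    haveI : IsMulCommutative H := h
    exact Subgroup.mul_comm_of_mem_isMulCommutative (H := H) ha hb
  · intro h
    exact ⟨⟨fun a b => Subtype.ext (h a a.2 b b.2)⟩⟩

lemma aux_closure_isCommutative {s : Set G} (hs : ∀ a ∈ s, ∀ b ∈ s, a * b = b * a) :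
    IsMulCommutative (Subgroup.closure s) := by
  have key : ∀ a ∈ s, ∀ b ∈ Subgroup.closure s, Commute a b := by
    intro a ha b hb
    induction hb using Subgroup.closure_induction with
    | mem x hx => exact hs a ha x hx
    | one => exact Commute.one_right a
    | mul x y hx hy ihx ihy => exact ihx.mul_right ihy
    | inv x hx ihx => exact ihx.inv_right
  have key2 : ∀ a ∈ Subgroup.closure s, ∀ b ∈ Subgroup.closure s, Commute a b := by
    intro a ha
    induction ha using Subgroup.closure_induction with
    | mem x hx => exact fun b hb => key x hx b hb
    | one => exact fun b hb => Commute.one_left b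
    | mul x y hx hy ihx ihy => exact fun b hb => (ihx b hb).mul_left (ihy b hb)
    | inv x hx ihx => exact fun b hb => (ihx b hb).inv_left
  exact aux_isCommutative_iff.mpr fun a ha b hb => key2 a ha b hb

lemma aux_centralizer_finiteIndex (hFC : ∀ g : G, {h : G | IsConj g h}.Finite) (g : G) :
    (Subgroup.centralizer {g}).FiniteIndex := by
  constructor
  have horb : MulAction.orbit (ConjAct G) g = {h : G | IsConj g h} := by
    ext h
    rw [ConjAct.mem_orbit_conjAct]
    exact isConj_comm
  rw [show (Subgroup.centralizer {g}).index = (MulAction.stabilizer (ConjAct G) g).index by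
      rw [Subgroup.centralizer_eq_comap_stabilizer]
      exact Subgroup.index_comap_of_surjective _ ConjAct.toConjAct.surjective,
    MulAction.index_stabilizer, horb]
  exact ((Set.ncard_pos (hFC g)).mpr ⟨g, IsConj.refl g⟩).ne'

lemma aux_center_finiteIndex (hFC : ∀ g : G, {h : G | IsConj g h}.Finite)
    {H : Subgroup G} (hfi : H.FiniteIndex)
    (hcomm : ∀ a ∈ H, ∀ b ∈ H, a * b = b * a) : (Subgroup.center G).FiniteIndex := by
  haveI := hfi
  set K : Subgroup G :=
    H ⊓ ⨅ q : G ⧸ H, Subgroup.centralizer {(Quotient.out q : G)} with hKdef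
  haveI hK2 : (⨅ q : G ⧸ H, Subgroup.centralizer {(Quotient.out q : G)}).FiniteIndex :=
    Subgroup.finiteIndex_iInf fun q => aux_centralizer_finiteIndex hFC _
  haveI hKfi : K.FiniteIndex := by rw [hKdef]; infer_instance
  have hle : K ≤ Subgroup.center G := by
    intro z hz
    rw [Subgroup.mem_center_iff]
    intro g
    obtain ⟨hz1, hz2⟩ := hz
    obtain ⟨h, hh⟩ := QuotientGroup.mk_out_eq_mul H g
    have c1 : Commute ((QuotientGroup.mk g : G ⧸ H).out) z :=
      Subgroup.mem_centralizer_iff.mp (Subgroup.mem_iInf.mp hz2 (QuotientGroup.mk g)) _ rfl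
    have c2 : Commute (h : G) z := hcomm _ h.2 _ hz1
    have hg : g = (QuotientGroup.mk g : G ⧸ H).out * (h : G)⁻¹ :=
      eq_mul_inv_iff_mul_eq.mpr hh.symm
    have : Commute g z := by rw [hg]; exact c1.mul_left c2.inv_left
    exact this
  exact Subgroup.finiteIndex_of_le hle

lemma aux_nonabelian (hFC : ∀ g : G, {h : G | IsConj g h}.Finite)
    (hinf : ¬ Finite (G ⧸ Subgroup.center G)) {H : Subgroup G} (hfi : H.FiniteIndex) :
    ∃ a ∈ H, ∃ b ∈ H, a * b ≠ b * a := by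
  by_contra hcon
  push_neg at hcon
  haveI := aux_center_finiteIndex hFC hfi hcon
  exact hinf (Subgroup.finite_quotient_of_finiteIndex (H := Subgroup.center G))

lemma aux_zorn (A : Subgroup G) (hA : IsMulCommutative A) :
    ∃ M : Subgroup G, A ≤ M ∧ IsMulCommutative M ∧
      ∀ B : Subgroup G, IsMulCommutative B → M ≤ B → B = M := by
  have hub : ∀ c ⊆ {B : Subgroup G | IsMulCommutative B}, IsChain (· ≤ ·) c →
      ∀ y ∈ c, ∃ ub ∈ {B : Subgroup G | IsMulCommutative B}, ∀ z ∈ c, z ≤ ub := by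
    intro c hcs hchain y hy
    refine ⟨sSup c, ?_, fun z hz => le_sSup hz⟩
    rw [Set.mem_setOf_eq, aux_isCommutative_iff]
    intro a ha b hb
    obtain ⟨Ha, hHa, haH⟩ :=
      (Subgroup.mem_sSup_of_directedOn ⟨y, hy⟩ hchain.directedOn).mp ha
    obtain ⟨Hb, hHb, hbH⟩ :=
      (Subgroup.mem_sSup_of_directedOn ⟨y, hy⟩ hchain.directedOn).mp hb
    rcases hchain.total hHa hHb with h | h
    · exact aux_isCommutative_iff.mp (hcs hHb) a (h haH) b hbH
    · exact aux_isCommutative_iff.mp (hcs hHa) a haH b (h hbH)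
  obtain ⟨M, hAM, hM⟩ := zorn_le_nonempty₀ {B : Subgroup G | IsMulCommutative B} hub A hA
  exact ⟨M, hAM, hM.1, fun B hB hMB => le_antisymm (hM.2 hB hMB) hMB⟩

end Aux

theorem maximal_abelian_subgroups_finite_iff {G : Type*} [Group G]
    (hFC : ∀ g : G, {h : G | IsConj g h}.Finite) :
    ((Set.Finite {A : Subgroup G | IsMulCommutative A ∧
        ∀ B : Subgroup G, IsMulCommutative B → A ≤ B → B = A}) ↔
      Finite (G ⧸ Subgroup.center G)) ∧
    (¬ Finite (G ⧸ Subgroup.center G) →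
      (2 : Cardinal) ^ Cardinal.aleph0 ≤
        Cardinal.mk {A : Subgroup G | IsMulCommutative A ∧
          ∀ B : Subgroup G, IsMulCommutative B → A ≤ B → B = A}) := by
  classical
  have part2 : ¬ Finite (G ⧸ Subgroup.center G) →
      (2 : Cardinal) ^ Cardinal.aleph0 ≤
        Cardinal.mk {A : Subgroup G | IsMulCommutative A ∧
          ∀ B : Subgroup G, IsMulCommutative B → A ≤ B → B = A} := by
    intro hinf
    obtain ⟨f, hP, hr⟩ := exists_seq_of_forall_finset_exists
      (fun p : G × G => p.1 * p.2 ≠ p.2 * p.1)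
      (fun p q => (Commute p.1 q.1 ∧ Commute p.1 q.2) ∧
        (Commute p.2 q.1 ∧ Commute p.2 q.2))
      (by
        intro s _
        have hHfi : (⨅ p ∈ s,
            (Subgroup.centralizer {p.1} ⊓ Subgroup.centralizer {p.2})).FiniteIndex := by
          apply Subgroup.finiteIndex_iInf'
          intro p _
          haveI := aux_centralizer_finiteIndex hFC p.1
          haveI := aux_centralizer_finiteIndex hFC p.2
          infer_instance
        obtain ⟨a, ha, b, hb, hab⟩ := aux_nonabelian hFC hinf hHfi
        refine ⟨(a, b), hab, ?_⟩
        intro p hp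
        have hla : a ∈ Subgroup.centralizer {p.1} ⊓ Subgroup.centralizer {p.2} :=
          SetLike.le_def.mp (iInf₂_le p hp) ha
        have hlb : b ∈ Subgroup.centralizer {p.1} ⊓ Subgroup.centralizer {p.2} :=
          SetLike.le_def.mp (iInf₂_le p hp) hb
        exact ⟨⟨Subgroup.mem_centralizer_iff.mp hla.1 _ rfl,
                Subgroup.mem_centralizer_iff.mp hlb.1 _ rfl⟩,
               ⟨Subgroup.mem_centralizer_iff.mp hla.2 _ rfl,
                Subgroup.mem_centralizer_iff.mp hlb.2 _ rfl⟩⟩)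
    have hcross : ∀ m n, m ≠ n →
        (Commute (f m).1 (f n).1 ∧ Commute (f m).1 (f n).2) ∧
        (Commute (f m).2 (f n).1 ∧ Commute (f m).2 (f n).2) := by
      intro m n hmn
      rcases lt_or_gt_of_ne hmn with h | h
      · exact hr m n h
      · obtain ⟨⟨c1, c2⟩, c3, c4⟩ := hr n m h
        exact ⟨⟨c1.symm, c3.symm⟩, ⟨c2.symm, c4.symm⟩⟩
    set T : Set ℕ → Set G :=
      fun s => (fun n => (f n).1) '' s ∪ (fun n => (f n).2) '' sᶜ with hT
    have hTcomm : ∀ s : Set ℕ, ∀ a ∈ T s, ∀ b ∈ T s, a * b = b * a := by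
      intro s a ha b hb
      rcases ha with ⟨m, hm, rfl⟩ | ⟨m, hm, rfl⟩ <;>
        rcases hb with ⟨n, hn, rfl⟩ | ⟨n, hn, rfl⟩
      · by_cases h : m = n
        · subst h; rfl
        · exact (hcross m n h).1.1
      · have h : m ≠ n := fun e => hn (e ▸ hm)
        exact (hcross m n h).1.2
      · have h : m ≠ n := fun e => hm (e ▸ hn)
        exact (hcross m n h).2.1
      · by_cases h : m = n
        · subst h; rfl
        · exact (hcross m n h).2.2
    have hMex : ∀ s : Set ℕ, ∃ M : Subgroup G, Subgroup.closure (T s) ≤ M ∧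
        IsMulCommutative M ∧ ∀ B : Subgroup G, IsMulCommutative B → M ≤ B → B = M :=
      fun s => aux_zorn _ (aux_closure_isCommutative (hTcomm s))
    choose M hM1 hM2 hM3 using hMex
    have hTM : ∀ s : Set ℕ, ∀ x ∈ T s, x ∈ M s :=
      fun s x hx => hM1 s (Subgroup.subset_closure hx)
    have hMinj : Function.Injective M := by
      intro s t hst
      by_contra hne
      have hex : ∃ n, ¬ (n ∈ s ↔ n ∈ t) := by
        by_contra hc
        push_neg at hc
        exact hne (Set.ext fun n => hc n)
      obtain ⟨n, hniff⟩ := hex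
      by_cases hns : n ∈ s <;> by_cases hnt : n ∈ t
      · exact hniff ⟨fun _ => hnt, fun _ => hns⟩
      · have hx : (f n).1 ∈ M s := hTM s _ (Or.inl ⟨n, hns, rfl⟩)
        have hy : (f n).2 ∈ M s := by
          rw [hst]
          exact hTM t _ (Or.inr ⟨n, hnt, rfl⟩)
        exact hP n (aux_isCommutative_iff.mp (hM2 s) _ hx _ hy)
      · have hx : (f n).1 ∈ M s := by
          rw [hst]
          exact hTM t _ (Or.inl ⟨n, hnt, rfl⟩)
        have hy : (f n).2 ∈ M s := hTM s _ (Or.inr ⟨n, hns, rfl⟩)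
        exact hP n (aux_isCommutative_iff.mp (hM2 s) _ hx _ hy)
      · exact hniff ⟨fun h => absurd h hns, fun h => absurd h hnt⟩
    have hinj : Function.Injective
        (fun s : Set ℕ => (⟨M s, hM2 s, hM3 s⟩ :
          {A : Subgroup G | IsMulCommutative A ∧
            ∀ B : Subgroup G, IsMulCommutative B → A ≤ B → B = A})) :=
      fun s t h => hMinj (congrArg Subtype.val h)
    have hle := Cardinal.lift_mk_le'.mpr ⟨⟨_, hinj⟩⟩
    simp [Cardinal.mk_set, Cardinal.mk_nat, Cardinal.lift_uzero, Cardinal.lift_power,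
      Cardinal.lift_aleph0, Cardinal.lift_two] at hle ⊢
    exact hle
  refine ⟨⟨?_, ?_⟩, part2⟩
  · intro hfin
    by_contra hinf
    have h2 := part2 hinf
    haveI := hfin.to_subtype
    have hlt : Cardinal.mk {A : Subgroup G | IsMulCommutative A ∧
        ∀ B : Subgroup G, IsMulCommutative B → A ≤ B → B = A} < Cardinal.aleph0 :=
      Cardinal.lt_aleph0_of_finite _
    exact (hlt.trans (Cardinal.cantor _)).not_ge h2
  · intro hq
    haveI := hq
    have hZle : ∀ A ∈ {A : Subgroup G | IsMulCommutative A ∧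
        ∀ B : Subgroup G, IsMulCommutative B → A ≤ B → B = A},
        Subgroup.center G ≤ A := by
      intro A hA
      have hBcomm : IsMulCommutative (Subgroup.closure ((A : Set G) ∪ (Subgroup.center G : Set G))) := by
        apply aux_closure_isCommutative
        intro a ha b hb
        rcases hb with hb | hb
        · rcases ha with ha | ha
          · exact aux_isCommutative_iff.mp hA.1 a ha b hb
          · exact (Subgroup.mem_center_iff.mp ha b).symm
        · exact Subgroup.mem_center_iff.mp hb a
      have hAB : A ≤ Subgroup.closure ((A : Set G) ∪ (Subgroup.center G : Set G)) :=
        fun x hx => Subgroup.subset_closure (Or.inl hx)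
      have hEq := hA.2 _ hBcomm hAB
      intro z hz
      rw [← hEq]
      exact Subgroup.subset_closure (Or.inr hz)
    haveI : Finite (Subgroup (G ⧸ Subgroup.center G)) :=
      Finite.of_injective (fun H => (H : Set (G ⧸ Subgroup.center G))) SetLike.coe_injective
    apply Set.Finite.of_finite_image (f := fun A : Subgroup G =>
      Subgroup.map (QuotientGroup.mk' (Subgroup.center G)) A) (Set.toFinite _)
    intro A hA B hB h
    have e1 : ∀ C : Subgroup G, Subgroup.center G ≤ C →
        Subgroup.comap (QuotientGroup.mk' (Subgroup.center G))
          (Subgroup.map (QuotientGroup.mk' (Subgroup.center G)) C) = C := by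
      intro C hC
      rw [Subgroup.comap_map_eq, QuotientGroup.ker_mk', sup_eq_left.mpr hC]
    calc A = Subgroup.comap (QuotientGroup.mk' (Subgroup.center G))
          (Subgroup.map (QuotientGroup.mk' (Subgroup.center G)) A) := (e1 A (hZle A hA)).symm
      _ = Subgroup.comap (QuotientGroup.mk' (Subgroup.center G))
          (Subgroup.map (QuotientGroup.mk' (Subgroup.center G)) B) :=
            congrArg (Subgroup.comap (QuotientGroup.mk' (Subgroup.center G))) h
      _ = B := e1 B (hZle B hB)
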